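/- For n ≥ 4 and 3 ≤ r ≤ ⌈(n+1)/2⌉, the number of transformations α ∈ RD*_n with |im(α)| = r equals the binomial coefficient C(n+1, 2r−1). -/

import Mathlib

open Finset

namespace ORDPaper

/-- `f` is a full transformation of the chain `{1,…,n}`, acting as the identity outside. -/
def IsTrans (n : ℕ) (f : ℕ → ℕ) : Prop :=
  (∀ x, 1 ≤ x → x ≤ n → 1 ≤ f x ∧ f x ≤ n) ∧ ∀ x, ¬(1 ≤ x ∧ x ≤ n) → f x = x

/-- Composition of transformations, written left to right: `x(αβ) = (xα)β`. -/
def comp (f g : ℕ → ℕ) : ℕ → ℕ := fun x => g (f x)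

/-- The value of `f` at the cyclic successor of `i` (so `(n+1)α = 1α`). -/
def nxt (n : ℕ) (f : ℕ → ℕ) (i : ℕ) : ℕ := if i = n then f 1 else f (i + 1)

/-- `(1α,…,nα)` is cyclic: there is at most one descent (cyclically). -/
def Cyclic (n : ℕ) (f : ℕ → ℕ) : Prop :=
  ((Finset.Icc 1 n).filter (fun i => nxt n f i < f i)).card ≤ 1

/-- `(1α,…,nα)` is anti-cyclic: there is at most one ascent (cyclically). -/
def AntiCyclic (n : ℕ) (f : ℕ → ℕ) : Prop :=
  ((Finset.Icc 1 n).filter (fun i => f i < nxt n f i)).card ≤ 1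

/-- Order-decreasing on `{1,…,n}`. -/
def Decreasing (n : ℕ) (f : ℕ → ℕ) : Prop := ∀ x, 1 ≤ x → x ≤ n → f x ≤ x

/-- Image of `{1,…,n}` under `f`. -/
def im (n : ℕ) (f : ℕ → ℕ) : Finset ℕ := (Finset.Icc 1 n).image f

/-- Fixed points of `f` in `{1,…,n}`. -/
def fixSet (n : ℕ) (f : ℕ → ℕ) : Finset ℕ := (Finset.Icc 1 n).filter (fun x => f x = x)

/-- The semigroup `D_n` of order-decreasing full transformations. -/
def Dn (n : ℕ) : Set (ℕ → ℕ) := {f | IsTrans n f ∧ Decreasing n f}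

/-- Orientation-preserving order-decreasing transformations. -/
def OPD (n : ℕ) : Set (ℕ → ℕ) := {f | f ∈ Dn n ∧ Cyclic n f}

/-- Oriented order-decreasing transformations. -/
def ORDn (n : ℕ) : Set (ℕ → ℕ) := {f | f ∈ Dn n ∧ (Cyclic n f ∨ AntiCyclic n f)}

/-- `RD*_n`: orientation-reversing, order-decreasing, not orientation-preserving. -/
def RDstar (n : ℕ) : Set (ℕ → ℕ) := {f | f ∈ Dn n ∧ AntiCyclic n f ∧ ¬ Cyclic n f}

/-- `ORD(n,r)`. -/
def ORDr (n r : ℕ) : Set (ℕ → ℕ) := {f | f ∈ ORDn n ∧ (im n f).card ≤ r}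

/-- `OPD(n,r)`. -/
def OPDr (n r : ℕ) : Set (ℕ → ℕ) := {f | f ∈ OPD n ∧ (im n f).card ≤ r}

/-- The order-reversing degree: `min(X_n \ 1α⁻¹)`. -/
noncomputable def ordDeg (n : ℕ) (f : ℕ → ℕ) : ℕ := sInf {x | 1 ≤ x ∧ x ≤ n ∧ f x ≠ 1}

/-- Minimum of the preimage of `x` under `f` inside `{1,…,n}`. -/
noncomputable def preMin (n : ℕ) (f : ℕ → ℕ) (x : ℕ) : ℕ := sInf {y | 1 ≤ y ∧ y ≤ n ∧ f y = x}

/-- Membership in the subsemigroup generated by `A`. -/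
inductive gen (A : Set (ℕ → ℕ)) : (ℕ → ℕ) → Prop
  | base {f} : f ∈ A → gen A f
  | mul {f g} : gen A f → gen A g → gen A (comp f g)

/-- Rank of a transformation semigroup `S`. -/
noncomputable def rank (S : Set (ℕ → ℕ)) : ℕ :=
  sInf {k | ∃ A : Set (ℕ → ℕ), A ⊆ S ∧ A.Finite ∧ A.ncard = k ∧ {f | gen A f} = S}

/-- `r̂ = min{r, ⌈(n+1)/2⌉}`. -/
def rhat (n r : ℕ) : ℕ := min r ((n + 2) / 2)

/-- `ρ_m` fixes `1,…,m` and sends `m+1,…,n` to `1`. -/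
def rho (n m : ℕ) : ℕ → ℕ := fun x =>
  if ¬(1 ≤ x ∧ x ≤ n) then x else if x ≤ m then x else 1

/-- The order-preserving degree `opd(α) = max{m : α|_{X_m} is order-preserving}`. -/
noncomputable def opd (n : ℕ) (f : ℕ → ℕ) : ℕ :=
  sSup {m | m ≤ n ∧ ∀ x y, 1 ≤ x → x ≤ y → y ≤ m → f x ≤ f y}

/-- The set `C = (⋃_{m=r+1}^n B_m) ∪ {ρ_2,…,ρ_r}`. -/
def Cset (n r : ℕ) : Set (ℕ → ℕ) :=
  {f | (f ∈ OPD n ∧ comp f f = f ∧ (im n f).card = r ∧ r + 1 ≤ opd n f ∧ opd n f ≤ n)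
    ∨ (∃ m, 2 ≤ m ∧ m ≤ r ∧ f = rho n m)}

/-- The map `λ_{m,r}`: sends `[1,m-1]` to `1`, maps `x ∈ [m, min(2m-p-2,n)]` to `2m-x`
(where `p = max{0, m-r}` is `m - r` in truncated subtraction), and the rest of `[1,n]` to `1`. -/
def lam (n r m : ℕ) : ℕ → ℕ := fun x =>
  if ¬(1 ≤ x ∧ x ≤ n) then x
  else if x < m then 1
  else if x ≤ min (2 * m - (m - r) - 2) n then 2 * m - x
  else 1

/-- `G_{n,r} = {λ_{m,r} : 3 ≤ m ≤ n-1}`. -/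
def Gset (n r : ℕ) : Set (ℕ → ℕ) := {f | ∃ m, 3 ≤ m ∧ m ≤ n - 1 ∧ f = lam n r m}

/-- `L_{m,r}`. -/
def Lset (n r m : ℕ) : Set (ℕ → ℕ) :=
  {f | f ∈ ORDn n ∧ im n f = im n (lam n r m) ∧
    ∀ x ∈ im n (lam n r m), preMin n f x = preMin n (lam n r m) x}

/-- `α_{m,r}`: the idempotent fixing `{1} ∪ [m, 2m-p-2]` and sending the rest of `[1,n]` to `1`. -/
def alphaMap (n r m : ℕ) : ℕ → ℕ := fun x =>
  if ¬(1 ≤ x ∧ x ≤ n) then x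
  else if x < m then 1
  else if x ≤ 2 * m - (m - r) - 2 then x
  else 1

/-- `β_{m,r}`: sends `[1,m-1]` to `1`, maps `m,…,2m-p-3` order-reversingly to `m,…,p+3`,
and `[2m-p-2, n]` to `p+2`. -/
def betaMap (n r m : ℕ) : ℕ → ℕ := fun x =>
  if ¬(1 ≤ x ∧ x ≤ n) then x
  else if x < m then 1
  else if x ≤ 2 * m - (m - r) - 3 then 2 * m - x
  else (m - r) + 2

/-- `S` is a subsemigroup of `T`. -/
def IsSubsemigroupOf (S T : Set (ℕ → ℕ)) : Prop :=
  S ⊆ T ∧ ∀ f ∈ S, ∀ g ∈ S, comp f g ∈ S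

/-- `S` is a maximal subsemigroup of `T`. -/
def IsMaximalSubsemigroupOf (S T : Set (ℕ → ℕ)) : Prop :=
  IsSubsemigroupOf S T ∧ S ≠ T ∧ ∀ U, IsSubsemigroupOf U T → S ⊆ U → U = S ∨ U = T


/- ============ Auxiliary development for card_J ============ -/

section Aux

open Nat Finset

/-- stepwise decreasing implies decreasing on an interval -/
private lemma step_mono {f : ℕ → ℕ} {a b : ℕ}
    (h : ∀ i, a ≤ i → i + 1 ≤ b → f (i + 1) ≤ f i) :
    ∀ {x y : ℕ}, a ≤ x → x ≤ y → y ≤ b → f y ≤ f x := by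
  intro x y hax hxy hyb
  induction y, hxy using Nat.le_induction with
  | base => exact le_rfl
  | succ y hxy ih =>
    exact (h y (hax.trans hxy) hyb).trans (ih (by omega))

/-- discrete intermediate value theorem for `Nat.count` -/
private lemma count_ivt (p : ℕ → Prop) [DecidablePred p] {a b t : ℕ} (hab : a ≤ b)
    (h1 : Nat.count p a ≤ t) (h2 : t ≤ Nat.count p b) :
    ∃ m, a ≤ m ∧ m ≤ b ∧ Nat.count p m = t := by
  induction b, hab using Nat.le_induction with
  | base => exact ⟨a, le_rfl, le_rfl, by omega⟩
  | succ b hb ih =>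
    by_cases h : t ≤ Nat.count p b
    · obtain ⟨m, hm1, hm2, hm3⟩ := ih h
      exact ⟨m, hm1, by omega, hm3⟩
    · have hs : Nat.count p (b + 1) ≤ Nat.count p b + 1 := by
        rw [Nat.count_succ]; split <;> omega
      exact ⟨b + 1, by omega, le_rfl, by omega⟩

/-- The decoding map. -/
private noncomputable def dec (n r : ℕ) (X : Finset ℕ) : ℕ → ℕ := fun x =>
  if ¬(1 ≤ x ∧ x ≤ n) then x
  else if Nat.count (· ∈ X) (x + 2) < r ∨ 2 * r - 1 ≤ Nat.count (· ∈ X) (x + 2) then 1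
  else Nat.nth (· ∈ X) (2 * r - 2 - Nat.count (· ∈ X) (x + 2))

/-- The encoding map. -/
private def enc (n : ℕ) (f : ℕ → ℕ) : Finset ℕ :=
  ((im n f).erase 1) ∪ ((Finset.Icc 2 n).filter (fun i => f i ≠ f (i - 1))).image (· + 1)

/-- The index set. -/
private def Tset (n r : ℕ) : Finset (Finset ℕ) :=
  (Finset.Icc 2 (n + 1)).powersetCard (2 * r - 2) ∪
    (Finset.Icc 2 (n + 1)).powersetCard (2 * r - 1)

private lemma mem_Tset {n r : ℕ} {X : Finset ℕ} :
    X ∈ Tset n r ↔ X ⊆ Finset.Icc 2 (n + 1) ∧ (X.card = 2 * r - 2 ∨ X.card = 2 * r - 1) := by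
  simp only [Tset, Finset.mem_union, Finset.mem_powersetCard]
  tauto

/-- Structural description of elements of `J_{n,r}`. -/
private def Struct (n r : ℕ) (f : ℕ → ℕ) : Prop :=
  ∃ j, 1 ≤ j ∧ j + 1 ≤ n ∧ (∀ x, ¬(1 ≤ x ∧ x ≤ n) → f x = x) ∧
    (∀ x, 1 ≤ x → x ≤ n → 1 ≤ f x ∧ f x ≤ x) ∧
    (∀ x, 1 ≤ x → x ≤ j → f x = 1) ∧ 2 ≤ f (j + 1) ∧
    (∀ i, j + 1 ≤ i → i + 1 ≤ n → f (i + 1) ≤ f i) ∧ (im n f).card = r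

/-- Structure implies membership in `J_{n,r}`. -/
private lemma struct_mem {n r : ℕ} (hr3 : 3 ≤ r) {f : ℕ → ℕ} (hf : Struct n r f) :
    f ∈ RDstar n ∧ (im n f).card = r := by
  obtain ⟨j, hj1, hjn, hout, hbd, hone, hj2, hmono, hcard⟩ := hf
  have hmono' : ∀ a b : ℕ, j + 1 ≤ a → a ≤ b → b ≤ n → f b ≤ f a := by
    intro a b ha hab hbn
    exact step_mono (a := j + 1) (b := n) (fun i hi hib => hmono i hi hib) ha hab hbn
  have hf1 : f 1 = 1 := hone 1 le_rfl hj1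
  have hgt : ∀ x, 1 ≤ x → x ≤ n → 2 ≤ f x → j + 1 ≤ x := by
    intro x h1 h2 h3
    by_contra h
    have := hone x h1 (by omega)
    omega
  refine ⟨⟨⟨⟨fun x h1 h2 => ⟨(hbd x h1 h2).1, le_trans (hbd x h1 h2).2 h2⟩, hout⟩,
    fun x h1 h2 => (hbd x h1 h2).2⟩, ?_, ?_⟩, hcard⟩
  · -- AntiCyclic
    refine le_trans (Finset.card_le_card (fun i hi => ?_)) (by simp : ({j} : Finset ℕ).card ≤ 1)
    simp only [Finset.mem_filter, Finset.mem_Icc] at hi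
    obtain ⟨⟨hi1, hin⟩, hasc⟩ := hi
    simp only [Finset.mem_singleton]
    by_cases hin' : i = n
    · exfalso
      rw [nxt, if_pos hin', hf1] at hasc
      have := (hbd i hi1 hin).1
      omega
    · rw [nxt, if_neg hin'] at hasc
      by_contra hij
      rcases Nat.lt_or_ge i j with h | h
      · rw [hone i hi1 (by omega), hone (i + 1) (by omega) (by omega)] at hasc
        omega
      · have : j + 1 ≤ i := by omega
        have := hmono i this (by omega)
        omega
  · -- not Cyclic
    intro hcyc
    have h1m : 1 ∈ im n f :=
      Finset.mem_image.2 ⟨1, Finset.mem_Icc.2 ⟨le_rfl, by omega⟩, hf1⟩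
    set B := (im n f).erase 1 with hB
    have hBcard : B.card = r - 1 := by
      rw [hB, Finset.card_erase_of_mem h1m, hcard]
    have hBne : B.Nonempty := Finset.card_pos.1 (by omega)
    set v := B.min' hBne with hv
    have hvB : v ∈ B := Finset.min'_mem _ _
    have hBvne : (B.erase v).Nonempty := Finset.card_pos.1 (by
      rw [Finset.card_erase_of_mem hvB, hBcard]; omega)
    obtain ⟨u, hu⟩ := hBvne
    have huB : u ∈ B := Finset.mem_of_mem_erase hu
    have huv : u ≠ v := Finset.ne_of_mem_erase hu
    have hvle : v ≤ u := Finset.min'_le _ _ huB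
    -- basic facts
    have hmemB : ∀ w, w ∈ B → 2 ≤ w ∧ ∃ y, 1 ≤ y ∧ y ≤ n ∧ f y = w := by
      intro w hw
      have hw1 : w ≠ 1 := Finset.ne_of_mem_erase hw
      have hwim : w ∈ im n f := Finset.mem_of_mem_erase hw
      obtain ⟨y, hy, hfy⟩ := Finset.mem_image.1 hwim
      rw [Finset.mem_Icc] at hy
      have := (hbd y hy.1 hy.2).1
      exact ⟨by omega, y, hy.1, hy.2, hfy⟩
    obtain ⟨hv2, z, hz1, hz2, hzv⟩ := hmemB v hvB
    obtain ⟨hu2, y, hy1, hy2, hyu⟩ := hmemB u huB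
    -- i1 : last position with value ≥ v+1
    set P := (Finset.Icc 1 n).filter (fun i => v + 1 ≤ f i) with hP
    have hPne : P.Nonempty := ⟨y, by
      simp only [hP, Finset.mem_filter, Finset.mem_Icc]
      exact ⟨⟨hy1, hy2⟩, by omega⟩⟩
    set i1 := P.max' hPne with hi1
    have hi1P : i1 ∈ P := Finset.max'_mem _ _
    have hi1mem : 1 ≤ i1 ∧ i1 ≤ n ∧ v + 1 ≤ f i1 := by
      have := hi1P
      simp only [hP, Finset.mem_filter, Finset.mem_Icc] at this
      exact ⟨this.1.1, this.1.2, this.2⟩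
    -- i2 : last position with value ≥ 2
    set Q := (Finset.Icc 1 n).filter (fun i => 2 ≤ f i) with hQ
    have hQne : Q.Nonempty := ⟨z, by
      simp only [hQ, Finset.mem_filter, Finset.mem_Icc]
      exact ⟨⟨hz1, hz2⟩, by omega⟩⟩
    set i2 := Q.max' hQne with hi2
    have hi2Q : i2 ∈ Q := Finset.max'_mem _ _
    have hi2mem : 1 ≤ i2 ∧ i2 ≤ n ∧ 2 ≤ f i2 := by
      have := hi2Q
      simp only [hQ, Finset.mem_filter, Finset.mem_Icc] at this
      exact ⟨this.1.1, this.1.2, this.2⟩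
    have hzQ : z ∈ Q := by
      simp only [hQ, Finset.mem_filter, Finset.mem_Icc]
      exact ⟨⟨hz1, hz2⟩, by omega⟩
    have hzi2 : z ≤ i2 := Finset.le_max' _ _ hzQ
    have hi1z : i1 < z := by
      by_contra h
      have hzi1 : z ≤ i1 := by omega
      have hzj : j + 1 ≤ z := hgt z hz1 hz2 (by omega)
      have := hmono' z i1 hzj hzi1 hi1mem.2.1
      omega
    have hi1i2 : i1 < i2 := by omega
    -- descent at i1
    have hd1 : nxt n f i1 < f i1 := by
      have hi1n : i1 ≠ n := by omega
      rw [nxt, if_neg hi1n]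
      have h1 : i1 + 1 ∉ P := fun hmem => by
        have := Finset.le_max' _ _ hmem
        omega
      have h2 : ¬(v + 1 ≤ f (i1 + 1)) := fun hc => h1 (by
        simp only [hP, Finset.mem_filter, Finset.mem_Icc]
        exact ⟨⟨by omega, by omega⟩, hc⟩)
      omega
    -- descent at i2
    have hd2 : nxt n f i2 < f i2 := by
      by_cases hi2n : i2 = n
      · rw [nxt, if_pos hi2n, hf1]; omega
      · rw [nxt, if_neg hi2n]
        have h1 : i2 + 1 ∉ Q := fun hmem => by
          have := Finset.le_max' _ _ hmem
          omega
        have h2 : ¬(2 ≤ f (i2 + 1)) := fun hc => h1 (by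
          simp only [hQ, Finset.mem_filter, Finset.mem_Icc]
          exact ⟨⟨by omega, by omega⟩, hc⟩)
        omega
    -- contradiction with Cyclic
    have hsub : ({i1, i2} : Finset ℕ) ⊆ (Finset.Icc 1 n).filter (fun i => nxt n f i < f i) := by
      intro w hw
      simp only [Finset.mem_insert, Finset.mem_singleton] at hw
      rcases hw with rfl | rfl
      · exact Finset.mem_filter.2 ⟨Finset.mem_Icc.2 ⟨hi1mem.1, hi1mem.2.1⟩, hd1⟩
      · exact Finset.mem_filter.2 ⟨Finset.mem_Icc.2 ⟨hi2mem.1, hi2mem.2.1⟩, hd2⟩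
    have : 2 ≤ ((Finset.Icc 1 n).filter (fun i => nxt n f i < f i)).card := by
      calc 2 = ({i1, i2} : Finset ℕ).card := by
              rw [Finset.card_insert_of_notMem (by simp; omega), Finset.card_singleton]
        _ ≤ _ := Finset.card_le_card hsub
    unfold Cyclic at hcyc
    omega

/-- Membership in `J_{n,r}` implies structure. -/
private lemma mem_struct {n r : ℕ} (hr3 : 3 ≤ r) {f : ℕ → ℕ}
    (h : f ∈ RDstar n ∧ (im n f).card = r) : Struct n r f := by
  obtain ⟨⟨⟨⟨hbd', hout⟩, hdec⟩, hanti, _hncyc⟩, hcard⟩ := h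
  have hn1 : 1 ≤ n := by
    by_contra hn
    have : im n f = ∅ := by
      unfold im
      rw [show Finset.Icc 1 n = ∅ by rw [Finset.Icc_eq_empty_iff]; omega]
      simp
    rw [this] at hcard
    simp at hcard
    omega
  have hf1 : f 1 = 1 := le_antisymm (hdec 1 le_rfl hn1) (hbd' 1 le_rfl hn1).1
  set Asc := (Finset.Icc 1 n).filter (fun i => f i < nxt n f i) with hAsc
  have hne : Asc.Nonempty := by
    rw [Finset.nonempty_iff_ne_empty]
    intro hempty
    have hnoasc : ∀ i, 1 ≤ i → i + 1 ≤ n → f (i + 1) ≤ f i := by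
      intro i h1 h2
      by_contra hc
      have : i ∈ Asc := by
        simp only [hAsc, Finset.mem_filter, Finset.mem_Icc]
        refine ⟨⟨h1, by omega⟩, ?_⟩
        rw [nxt, if_neg (by omega : i ≠ n)]
        omega
      rw [hempty] at this
      simp at this
    have hall : ∀ x, 1 ≤ x → x ≤ n → f x = 1 := by
      intro x h1 h2
      have := step_mono (a := 1) (b := n) hnoasc le_rfl h1 h2
      have := (hbd' x h1 h2).1
      omega
    have : im n f ⊆ {1} := by
      intro w hw
      obtain ⟨y, hy, hfy⟩ := Finset.mem_image.1 hw
      rw [Finset.mem_Icc] at hy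
      simp [← hfy, hall y hy.1 hy.2]
    have := Finset.card_le_card this
    simp at this
    omega
  obtain ⟨j, hjA⟩ := hne
  have hjmem : 1 ≤ j ∧ j ≤ n ∧ f j < nxt n f j := by
    have := hjA
    simp only [hAsc, Finset.mem_filter, Finset.mem_Icc] at this
    exact ⟨this.1.1, this.1.2, this.2⟩
  have hAcard : Asc.card ≤ 1 := hanti
  have huniq : ∀ i, 1 ≤ i → i ≤ n → f i < nxt n f i → i = j := by
    intro i h1 h2 h3
    have hiA : i ∈ Asc := by
      simp only [hAsc, Finset.mem_filter, Finset.mem_Icc]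
      exact ⟨⟨h1, h2⟩, h3⟩
    exact Finset.card_le_one.1 hAcard i hiA j hjA
  have hjn : j ≠ n := by
    intro hcontra
    have := hjmem.2.2
    rw [nxt, if_pos hcontra, hf1] at this
    have := (hbd' j hjmem.1 hjmem.2.1).1
    omega
  have hasc : f j < f (j + 1) := by
    have := hjmem.2.2
    rwa [nxt, if_neg hjn] at this
  have htail : ∀ i, j + 1 ≤ i → i + 1 ≤ n → f (i + 1) ≤ f i := by
    intro i h1 h2
    by_contra hc
    have : i = j := huniq i (by omega) (by omega) (by
      rw [nxt, if_neg (by omega : i ≠ n)]; omega)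
    omega
  have hhead : ∀ x, 1 ≤ x → x ≤ j → f x = 1 := by
    intro x h1 h2
    have hstep : ∀ i, 1 ≤ i → i + 1 ≤ j → f (i + 1) ≤ f i := by
      intro i hi1 hij
      by_contra hc
      have : i = j := huniq i hi1 (by omega) (by
        rw [nxt, if_neg (by omega : i ≠ n)]; omega)
      omega
    have h3 := step_mono (a := 1) (b := j) hstep le_rfl h1 h2
    rw [hf1] at h3
    have := (hbd' x h1 (by omega)).1
    omega
  have hfj : f j = 1 := hhead j hjmem.1 le_rfl
  exact ⟨j, hjmem.1, by omega, hout,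
    fun x h1 h2 => ⟨(hbd' x h1 h2).1, hdec x h1 h2⟩,
    hhead, by omega, htail, hcard⟩

end Aux

section DecSide

open Nat Finset

variable {n r : ℕ} {X : Finset ℕ}

private lemma pfin (X : Finset ℕ) : (Set.ofPred (· ∈ X)).Finite := by
  have : Set.ofPred (· ∈ X) = ↑X := rfl
  rw [this]
  exact X.finite_toSet

private lemma toFinset_eq (X : Finset ℕ) : (pfin X).toFinset = X := by
  ext y
  simp [Set.Finite.mem_toFinset]

private lemma count_le_cardX (m : ℕ) : Nat.count (· ∈ X) m ≤ X.card := by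
  have := Nat.count_le_card (pfin X) m
  rwa [toFinset_eq] at this

private lemma nth_memX {k : ℕ} (hk : k < X.card) : Nat.nth (· ∈ X) k ∈ X := by
  have := Nat.nth_mem_of_lt_card (pfin X) (by rwa [toFinset_eq])
  exact this

private lemma count_nthX {k : ℕ} (hk : k < X.card) :
    Nat.count (· ∈ X) (Nat.nth (· ∈ X) k) = k :=
  Nat.count_nth_of_lt_card_finite (pfin X) (by rwa [toFinset_eq])

private lemma nth_ltX {k l : ℕ} (h : k < l) (hl : l < X.card) :
    Nat.nth (· ∈ X) k < Nat.nth (· ∈ X) l :=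
  Nat.nth_lt_nth_of_lt_card (pfin X) h (by rwa [toFinset_eq])

private lemma nth_leX {k l : ℕ} (h : k ≤ l) (hl : l < X.card) :
    Nat.nth (· ∈ X) k ≤ Nat.nth (· ∈ X) l :=
  Nat.nth_le_nth_of_lt_card (pfin X) h (by rwa [toFinset_eq])

private lemma count_topX (hXsub : X ⊆ Finset.Icc 2 (n + 1)) :
    Nat.count (· ∈ X) (n + 2) = X.card := by
  rw [Nat.count_eq_card_filter_range]
  congr 1
  ext y
  simp only [Finset.mem_filter, Finset.mem_range]
  constructor
  · exact fun h => h.2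
  · intro h
    have := Finset.mem_Icc.1 (hXsub h)
    exact ⟨by omega, h⟩

private lemma count_threeX (hXsub : X ⊆ Finset.Icc 2 (n + 1)) :
    Nat.count (· ∈ X) 3 ≤ 1 := by
  rw [Nat.count_eq_card_filter_range]
  calc ((Finset.range 3).filter (· ∈ X)).card ≤ ({2} : Finset ℕ).card := by
        apply Finset.card_le_card
        intro y hy
        simp only [Finset.mem_filter, Finset.mem_range] at hy
        have := Finset.mem_Icc.1 (hXsub hy.2)
        simp only [Finset.mem_singleton]
        omega
    _ = 1 := by simp

private lemma dec_in {x : ℕ} (h1 : 1 ≤ x) (h2 : x ≤ n) :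
    dec n r X x = if Nat.count (· ∈ X) (x + 2) < r ∨ 2 * r - 1 ≤ Nat.count (· ∈ X) (x + 2)
      then 1 else Nat.nth (· ∈ X) (2 * r - 2 - Nat.count (· ∈ X) (x + 2)) := by
  unfold dec
  rw [if_neg (not_not_intro ⟨h1, h2⟩)]

/-- All the basic facts about `dec n r X` for `X ∈ Tset n r`, bundled. -/
private lemma dec_basic (hr3 : 3 ≤ r) (hXsub : X ⊆ Finset.Icc 2 (n + 1))
    (hK : X.card = 2 * r - 2 ∨ X.card = 2 * r - 1) :
    (2 ≤ Nat.nth (· ∈ X) (r - 1) - 2 + 2) ∧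
    (Nat.nth (· ∈ X) (r - 1) - 2 + 1 ≤ n) := by
  have hKlb : 2 * r - 2 ≤ X.card := by omega
  have hr1K : r - 1 < X.card := by omega
  have h0r : (0 : ℕ) < r - 1 := by omega
  have hlt : Nat.nth (· ∈ X) 0 < Nat.nth (· ∈ X) (r - 1) := nth_ltX h0r hr1K
  have h0 := Finset.mem_Icc.1 (hXsub (nth_memX (show 0 < X.card by omega)))
  have h1 := Finset.mem_Icc.1 (hXsub (nth_memX hr1K))
  omega

end DecSide

section DecSide2

open Nat Finset

variable {n r : ℕ} {X : Finset ℕ}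

private lemma im_dec (hr3 : 3 ≤ r) (hXsub : X ⊆ Finset.Icc 2 (n + 1))
    (hK : X.card = 2 * r - 2 ∨ X.card = 2 * r - 1) :
    im n (dec n r X) = insert 1 ((Finset.range (r - 1)).image (Nat.nth (· ∈ X))) := by
  have hn : 2 * r - 2 ≤ n := by
    have := Finset.card_le_card hXsub
    rw [Nat.card_Icc] at this
    omega
  apply Finset.Subset.antisymm
  · intro y hy
    obtain ⟨x, hx, rfl⟩ := Finset.mem_image.1 hy
    rw [Finset.mem_Icc] at hx
    rw [dec_in hx.1 hx.2]
    split_ifs with h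
    · exact Finset.mem_insert_self 1 _
    · push_neg at h
      exact Finset.mem_insert_of_mem (Finset.mem_image.2
        ⟨2 * r - 2 - Nat.count (· ∈ X) (x + 2), Finset.mem_range.2 (by omega), rfl⟩)
  · intro y hy
    rcases Finset.mem_insert.1 hy with rfl | hy
    · refine Finset.mem_image.2 ⟨1, Finset.mem_Icc.2 ⟨le_rfl, by omega⟩, ?_⟩
      rw [dec_in le_rfl (by omega)]
      rw [if_pos]
      left
      rw [show (1:ℕ) + 2 = 3 by norm_num]
      have := count_threeX hXsub
      omega
    · obtain ⟨k, hk, rfl⟩ := Finset.mem_image.1 hy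
      rw [Finset.mem_range] at hk
      have h3 := count_threeX hXsub
      have htop := count_topX hXsub
      obtain ⟨m, hm3, hmn, hcnt⟩ := count_ivt (· ∈ X) (show 3 ≤ n + 2 by omega)
        (show Nat.count (· ∈ X) 3 ≤ 2 * r - 2 - k by omega)
        (show 2 * r - 2 - k ≤ Nat.count (· ∈ X) (n + 2) by omega)
      refine Finset.mem_image.2 ⟨m - 2, Finset.mem_Icc.2 ⟨by omega, by omega⟩, ?_⟩
      rw [dec_in (by omega) (by omega), show m - 2 + 2 = m by omega, hcnt,
        if_neg (by omega : ¬(2 * r - 2 - k < r ∨ 2 * r - 1 ≤ 2 * r - 2 - k))]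
      congr 1
      omega

private lemma dec_struct (hr3 : 3 ≤ r) (hXsub : X ⊆ Finset.Icc 2 (n + 1))
    (hK : X.card = 2 * r - 2 ∨ X.card = 2 * r - 1) : Struct n r (dec n r X) := by
  have hr1K : r - 1 < X.card := by omega
  have hn : 2 * r - 2 ≤ n := by
    have := Finset.card_le_card hXsub
    rw [Nat.card_Icc] at this
    omega
  have hnth := Finset.mem_Icc.1 (hXsub (nth_memX hr1K))
  have hnth3 : 3 ≤ Nat.nth (· ∈ X) (r - 1) := by
    have hlt : Nat.nth (· ∈ X) 0 < Nat.nth (· ∈ X) (r - 1) := nth_ltX (by omega) hr1K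
    have h0 := Finset.mem_Icc.1 (hXsub (nth_memX (show 0 < X.card by omega)))
    omega
  have hc : Nat.count (· ∈ X) (Nat.nth (· ∈ X) (r - 1) + 1) = r := by
    rw [Nat.count_succ, count_nthX hr1K, if_pos (nth_memX hr1K)]
    omega
  set j := Nat.nth (· ∈ X) (r - 1) - 2 with hjdef
  have hge : ∀ x, j + 1 ≤ x → r ≤ Nat.count (· ∈ X) (x + 2) := by
    intro x hx
    calc r = Nat.count (· ∈ X) (Nat.nth (· ∈ X) (r - 1) + 1) := hc.symm
      _ ≤ Nat.count (· ∈ X) (x + 2) := Nat.count_monotone _ (by omega)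
  refine ⟨j, by omega, by omega, ?_, ?_, ?_, ?_, ?_, ?_⟩
  · intro x hx
    unfold dec
    rw [if_pos hx]
  · intro x h1 h2
    rw [dec_in h1 h2]
    split_ifs with h
    · exact ⟨le_rfl, h1⟩
    · push_neg at h
      obtain ⟨hl, hu⟩ := h
      set N := Nat.count (· ∈ X) (x + 2) with hN
      set k := 2 * r - 2 - N with hkdef
      have hkr : k ≤ r - 2 := by omega
      have hmem := Finset.mem_Icc.1 (hXsub (nth_memX (show k < X.card by omega)))
      have hlt1 : Nat.nth (· ∈ X) (k + 1) < x + 2 :=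
        Nat.nth_lt_of_lt_count (by omega)
      have hlt2 : Nat.nth (· ∈ X) k < Nat.nth (· ∈ X) (k + 1) :=
        nth_ltX (by omega) (by omega)
      exact ⟨by omega, by omega⟩
  · intro x h1 h2
    rw [dec_in h1 (by omega), if_pos]
    left
    have : Nat.count (· ∈ X) (x + 2) ≤ Nat.count (· ∈ X) (Nat.nth (· ∈ X) (r - 1)) :=
      Nat.count_monotone _ (by omega)
    rw [count_nthX hr1K] at this
    omega
  · rw [dec_in (by omega) (by omega), show j + 1 + 2 = Nat.nth (· ∈ X) (r - 1) + 1 by omega,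
      hc, if_neg (by omega : ¬(r < r ∨ 2 * r - 1 ≤ r))]
    exact (Finset.mem_Icc.1 (hXsub (nth_memX (show 2 * r - 2 - r < X.card by omega)))).1
  · intro i hi1 hi2
    have ha := hge i hi1
    have hb := hge (i + 1) (by omega)
    have hab : Nat.count (· ∈ X) (i + 2) ≤ Nat.count (· ∈ X) (i + 1 + 2) :=
      Nat.count_monotone _ (by omega)
    have hcardb := count_le_cardX (X := X) (i + 1 + 2)
    rw [dec_in (by omega) hi2, dec_in (by omega) (by omega)]
    by_cases hbig : 2 * r - 1 ≤ Nat.count (· ∈ X) (i + 1 + 2)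
    · rw [if_pos (Or.inr hbig)]
      split_ifs with h
      · exact le_rfl
      · have := (Finset.mem_Icc.1 (hXsub (nth_memX
          (show 2 * r - 2 - Nat.count (· ∈ X) (i + 2) < X.card by omega)))).1
        omega
    · rw [if_neg (by omega : ¬(Nat.count (· ∈ X) (i + 1 + 2) < r ∨
          2 * r - 1 ≤ Nat.count (· ∈ X) (i + 1 + 2))),
        if_neg (by omega : ¬(Nat.count (· ∈ X) (i + 2) < r ∨
          2 * r - 1 ≤ Nat.count (· ∈ X) (i + 2)))]
      exact nth_leX (by omega) (by omega)
  · rw [im_dec hr3 hXsub hK]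
    have hnm : (1 : ℕ) ∉ (Finset.range (r - 1)).image (Nat.nth (· ∈ X)) := by
      intro h
      obtain ⟨k, hk, hk1⟩ := Finset.mem_image.1 h
      rw [Finset.mem_range] at hk
      have := Finset.mem_Icc.1 (hXsub (nth_memX (show k < X.card by omega)))
      omega
    rw [Finset.card_insert_of_notMem hnm, Finset.card_image_of_injOn, Finset.card_range]
    · omega
    · intro a ha b hb hab
      simp only [Finset.coe_range, Set.mem_Iio] at ha hb
      by_contra hne
      rcases lt_or_gt_of_ne hne with h | h
      · exact absurd hab (nth_ltX h (by omega)).ne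
      · exact absurd hab.symm (nth_ltX h (by omega)).ne

end DecSide2

section DecSide3

open Nat Finset

variable {n r : ℕ} {X : Finset ℕ}

private lemma dec_diff_iff (hr3 : 3 ≤ r) (hXsub : X ⊆ Finset.Icc 2 (n + 1))
    (hK : X.card = 2 * r - 2 ∨ X.card = 2 * r - 1) {i : ℕ} (h2i : 2 ≤ i) (hin : i ≤ n) :
    (dec n r X i ≠ dec n r X (i - 1)) ↔
      ((i + 1) ∈ X ∧ r - 1 ≤ Nat.count (· ∈ X) (i + 1)) := by
  have e1 : i - 1 + 2 = i + 1 := by omega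
  have e2 : i + 2 = (i + 1) + 1 := by omega
  have hprev : dec n r X (i - 1) =
      if Nat.count (· ∈ X) (i + 1) < r ∨ 2 * r - 1 ≤ Nat.count (· ∈ X) (i + 1) then 1
      else Nat.nth (· ∈ X) (2 * r - 2 - Nat.count (· ∈ X) (i + 1)) := by
    rw [dec_in (by omega) (by omega), e1]
  set a := Nat.count (· ∈ X) (i + 1) with hadef
  have hb : Nat.count (· ∈ X) (i + 2) = a + (if (i + 1) ∈ X then 1 else 0) := by
    rw [e2, Nat.count_succ]
  have hcur := dec_in (n := n) (r := r) (X := X) (x := i) (by omega) hin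
  by_cases hm : (i + 1) ∈ X
  · rw [if_pos hm] at hb
    have haK : a + 1 ≤ X.card := hb ▸ count_le_cardX (i + 2)
    have ha2 : a ≤ 2 * r - 2 := by omega
    have hmain : (dec n r X i ≠ dec n r X (i - 1)) ↔ r - 1 ≤ a := by
      rcases (show a ≤ r - 2 ∨ a = r - 1 ∨ (r ≤ a ∧ a ≤ 2 * r - 3) ∨ a = 2 * r - 2
          by omega) with h | h | ⟨h, h'⟩ | h
      · apply iff_of_false _ (by omega)
        rw [hcur, hprev, hb, if_pos (by omega : a < r ∨ 2 * r - 1 ≤ a),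
          if_pos (by omega : a + 1 < r ∨ 2 * r - 1 ≤ a + 1)]
        simp
      · apply iff_of_true _ (by omega)
        rw [hcur, hprev, hb, if_pos (by omega : a < r ∨ 2 * r - 1 ≤ a),
          if_neg (by omega : ¬(a + 1 < r ∨ 2 * r - 1 ≤ a + 1))]
        have := (Finset.mem_Icc.1 (hXsub (nth_memX
          (show 2 * r - 2 - (a + 1) < X.card by omega)))).1
        omega
      · apply iff_of_true _ (by omega)
        rw [hcur, hprev, hb, if_neg (by omega : ¬(a < r ∨ 2 * r - 1 ≤ a)),
          if_neg (by omega : ¬(a + 1 < r ∨ 2 * r - 1 ≤ a + 1))]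
        exact (nth_ltX (show 2 * r - 2 - (a + 1) < 2 * r - 2 - a by omega)
          (by omega)).ne
      · apply iff_of_true _ (by omega)
        rw [hcur, hprev, hb, if_neg (by omega : ¬(a < r ∨ 2 * r - 1 ≤ a)),
          if_pos (by omega : a + 1 < r ∨ 2 * r - 1 ≤ a + 1)]
        have := (Finset.mem_Icc.1 (hXsub (nth_memX
          (show 2 * r - 2 - a < X.card by omega)))).1
        omega
    rw [hmain]
    simp [hm]
  · rw [if_neg hm, add_zero] at hb
    have : dec n r X i = dec n r X (i - 1) := by
      rw [hcur, hprev, hb]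
    simp [this, hm]

private lemma enc_dec (hr3 : 3 ≤ r) (hXsub : X ⊆ Finset.Icc 2 (n + 1))
    (hK : X.card = 2 * r - 2 ∨ X.card = 2 * r - 1) :
    enc n (dec n r X) = X := by
  have hpart1 : (im n (dec n r X)).erase 1 =
      X.filter (fun y => Nat.count (· ∈ X) y ≤ r - 2) := by
    rw [im_dec hr3 hXsub hK, Finset.erase_insert]
    · ext y
      simp only [Finset.mem_image, Finset.mem_range, Finset.mem_filter]
      constructor
      · rintro ⟨k, hk, rfl⟩
        exact ⟨nth_memX (by omega), by rw [count_nthX (by omega)]; omega⟩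
      · rintro ⟨hy, hcy⟩
        exact ⟨Nat.count (· ∈ X) y, by omega, Nat.nth_count hy⟩
    · intro h
      obtain ⟨k, hk, hk1⟩ := Finset.mem_image.1 h
      rw [Finset.mem_range] at hk
      have := Finset.mem_Icc.1 (hXsub (nth_memX (show k < X.card by omega)))
      omega
  have hpart2 : ((Finset.Icc 2 n).filter
        (fun i => dec n r X i ≠ dec n r X (i - 1))).image (· + 1) =
      X.filter (fun y => r - 1 ≤ Nat.count (· ∈ X) y) := by
    ext y
    simp only [Finset.mem_image, Finset.mem_filter, Finset.mem_Icc]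
    constructor
    · rintro ⟨i, ⟨⟨h2i, hin⟩, hne⟩, rfl⟩
      exact (dec_diff_iff hr3 hXsub hK h2i hin).1 hne
    · rintro ⟨hy, hcy⟩
      have hyb := Finset.mem_Icc.1 (hXsub hy)
      have h1c : 1 < Nat.count (· ∈ X) y := by omega
      have hn1 : Nat.nth (· ∈ X) 1 < y := Nat.nth_lt_of_lt_count h1c
      have hn0 : Nat.nth (· ∈ X) 0 < Nat.nth (· ∈ X) 1 := nth_ltX (by omega) (by omega)
      have hn0b := Finset.mem_Icc.1 (hXsub (nth_memX (show 0 < X.card by omega)))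
      have hy4 : 4 ≤ y := by omega
      refine ⟨y - 1, ⟨⟨by omega, by omega⟩, ?_⟩, by omega⟩
      rw [dec_diff_iff hr3 hXsub hK (by omega) (by omega), show y - 1 + 1 = y by omega]
      exact ⟨hy, hcy⟩
  show ((im n (dec n r X)).erase 1) ∪ _ = X
  rw [hpart1, hpart2]
  ext y
  simp only [Finset.mem_union, Finset.mem_filter]
  constructor
  · rintro (⟨h, _⟩ | ⟨h, _⟩) <;> exact h
  · intro h
    by_cases hc : Nat.count (· ∈ X) y ≤ r - 2
    · exact Or.inl ⟨h, hc⟩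
    · exact Or.inr ⟨h, by omega⟩

end DecSide3

section StructSide

open Nat Finset

private lemma succ_inj' : Function.Injective (· + 1 : ℕ → ℕ) := fun a b h => Nat.succ_injective h

private lemma struct_side {n r : ℕ} (hr3 : 3 ≤ r) {f : ℕ → ℕ} (hs : Struct n r f) :
    enc n f ∈ Tset n r ∧ dec n r (enc n f) = f := by
  obtain ⟨j, hj1, hjn, hout, hbd, hone, hj2, hmono, hcard⟩ := hs
  set Cf := (im n f).erase 1 with hCf
  set Mk := (Finset.Icc 2 n).filter (fun i => f i ≠ f (i - 1)) with hMk
  have hmono' : ∀ a b : ℕ, j + 1 ≤ a → a ≤ b → b ≤ n → f b ≤ f a := fun a b ha hab hbn =>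
    step_mono (fun i hi hib => hmono i hi hib) ha hab hbn
  have hf1 : f 1 = 1 := hone 1 le_rfl hj1
  have h1im : 1 ∈ im n f :=
    Finset.mem_image.2 ⟨1, Finset.mem_Icc.2 ⟨le_rfl, by omega⟩, hf1⟩
  have hCcard : Cf.card = r - 1 := by
    rw [hCf, Finset.card_erase_of_mem h1im, hcard]
  have hCmem : ∀ v, v ∈ Cf → 2 ≤ v ∧ v ≤ j + 1 ∧ ∃ y, j + 1 ≤ y ∧ y ≤ n ∧ f y = v := by
    intro v hv
    obtain ⟨hv1, hvim⟩ := Finset.mem_erase.1 hv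
    obtain ⟨y, hy, hfy⟩ := Finset.mem_image.1 hvim
    rw [Finset.mem_Icc] at hy
    have hb := hbd y hy.1 hy.2
    have hv2 : 2 ≤ v := by omega
    have hyj : j + 1 ≤ y := by
      by_contra h
      have := hone y hy.1 (by omega)
      omega
    have : f y ≤ f (j + 1) := hmono' (j + 1) y le_rfl hyj hy.2
    have := (hbd (j + 1) (by omega) hjn).2
    exact ⟨hv2, by omega, y, hyj, hy.2, hfy⟩
  have hMmem : ∀ i, i ∈ Mk → j + 1 ≤ i ∧ i ≤ n ∧ f i ≠ f (i - 1) := by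
    intro i hi
    obtain ⟨hii, hne⟩ := Finset.mem_filter.1 hi
    rw [Finset.mem_Icc] at hii
    refine ⟨?_, hii.2, hne⟩
    by_contra h
    have h1 := hone i (by omega) (by omega)
    have h2 := hone (i - 1) (by omega) (by omega)
    omega
  have hMk_j1 : j + 1 ∈ Mk := by
    refine Finset.mem_filter.2 ⟨Finset.mem_Icc.2 ⟨by omega, hjn⟩, ?_⟩
    rw [show j + 1 - 1 = j by omega, hone j hj1 le_rfl]
    omega
  have hMstrict : ∀ i i', i ∈ Mk → i' ∈ Mk → i < i' → f i' < f i := by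
    intro i i' hi hi' hlt
    obtain ⟨hij, hin, _⟩ := hMmem i hi
    obtain ⟨hij', hin', hne'⟩ := hMmem i' hi'
    have h1 : f i' ≤ f (i' - 1) := by
      have := hmono (i' - 1) (by omega) (by omega)
      rwa [show i' - 1 + 1 = i' by omega] at this
    have h2 : f (i' - 1) ≤ f i := hmono' i (i' - 1) hij (by omega) (by omega)
    omega
  have hMcount : ∀ x, j + 1 ≤ x → x ≤ n → 2 ≤ f x →
      (Mk.filter (· ≤ x)).card = (Cf.filter (fun v => f x ≤ v)).card := by
    intro x hx1 hx2 hfx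
    apply Finset.card_bij (fun i _ => f i)
    · intro i hi
      obtain ⟨hiMk, hix⟩ := Finset.mem_filter.1 hi
      obtain ⟨hij, hin, _⟩ := hMmem i hiMk
      have hfi : f x ≤ f i := hmono' i x hij hix hx2
      refine Finset.mem_filter.2 ⟨Finset.mem_erase.2 ⟨by omega, ?_⟩, hfi⟩
      exact Finset.mem_image.2 ⟨i, Finset.mem_Icc.2 ⟨by omega, hin⟩, rfl⟩
    · intro i hi i' hi' hff
      have hiMk := (Finset.mem_filter.1 hi).1
      have hiMk' := (Finset.mem_filter.1 hi').1
      by_contra hne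
      rcases lt_or_gt_of_ne hne with h | h
      · have := hMstrict i i' hiMk hiMk' h
        omega
      · have := hMstrict i' i hiMk' hiMk h
        omega
    · intro v hv
      obtain ⟨hvC, hfxv⟩ := Finset.mem_filter.1 hv
      obtain ⟨hv2, hvj, y, hy1, hy2, hyv⟩ := hCmem v hvC
      set Pz := (Finset.Icc (j + 1) n).filter (fun z => f z ≤ v) with hPz
      have hxP : x ∈ Pz := Finset.mem_filter.2 ⟨Finset.mem_Icc.2 ⟨hx1, hx2⟩, hfxv⟩
      have hPzne : Pz.Nonempty := ⟨x, hxP⟩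
      set i := Pz.min' hPzne with hidef
      have hiP := Finset.min'_mem Pz hPzne
      obtain ⟨hiIcc, hfiv⟩ := Finset.mem_filter.1 hiP
      rw [Finset.mem_Icc] at hiIcc
      have hyP : y ∈ Pz := Finset.mem_filter.2 ⟨Finset.mem_Icc.2 ⟨hy1, hy2⟩, by omega⟩
      have hiy : i ≤ y := Finset.min'_le _ _ hyP
      have hvfi : v ≤ f i := by
        have := hmono' i y hiIcc.1 hiy hy2
        omega
      have hfi : f i = v := le_antisymm hfiv hvfi
      have hiMk : i ∈ Mk := by
        refine Finset.mem_filter.2 ⟨Finset.mem_Icc.2 ⟨by omega, hiIcc.2⟩, ?_⟩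
        by_cases hij : i = j + 1
        · rw [hfi, hij, show j + 1 - 1 = j by omega, hone j hj1 le_rfl]
          omega
        · have hi1P : i - 1 ∉ Pz := by
            intro hc
            have := Finset.min'_le _ _ hc
            omega
          have : ¬(f (i - 1) ≤ v) := fun hc => hi1P
            (Finset.mem_filter.2 ⟨Finset.mem_Icc.2 ⟨by omega, by omega⟩, hc⟩)
          omega
      exact ⟨i, Finset.mem_filter.2 ⟨hiMk, Finset.min'_le _ _ hxP⟩, hfi⟩
  have hfj1 : f (j + 1) ≤ j + 1 := (hbd (j + 1) (by omega) hjn).2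
  have hvle : ∀ x, j + 1 ≤ x → x ≤ n → f x ≤ j + 1 := by
    intro x h1 h2
    have := hmono' (j + 1) x le_rfl h1 h2
    omega
  have hMtotal : (2 ≤ f n ∧ Mk.card = r - 1) ∨
      (f n = 1 ∧ Mk.card = r ∧ ∀ x, j + 1 ≤ x → x ≤ n → f x = 1 → ∀ i ∈ Mk, i ≤ x) := by
    rcases le_or_gt 2 (f n) with hfn | hfn
    · left
      refine ⟨hfn, ?_⟩
      have h1 : Mk.filter (· ≤ n) = Mk :=
        Finset.filter_true_of_mem (fun i hi => (hMmem i hi).2.1)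
      have h2 : Cf.filter (fun v => f n ≤ v) = Cf := by
        apply Finset.filter_true_of_mem
        intro v hv
        obtain ⟨_, _, y, hy1, hy2, hyv⟩ := hCmem v hv
        have := hmono' y n hy1 hy2 le_rfl
        omega
      rw [← h1, hMcount n (by omega) le_rfl hfn, h2, hCcard]
    · right
      have hfn1 : f n = 1 := by
        have := (hbd n (by omega) le_rfl).1
        omega
      set Q := (Finset.Icc 1 n).filter (fun i => 2 ≤ f i) with hQ
      have hQj : j + 1 ∈ Q := Finset.mem_filter.2 ⟨Finset.mem_Icc.2 ⟨by omega, hjn⟩, hj2⟩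
      have hQne : Q.Nonempty := ⟨j + 1, hQj⟩
      set e := Q.max' hQne with hedef
      have heQ := Finset.max'_mem Q hQne
      obtain ⟨heIcc, hfe⟩ := Finset.mem_filter.1 heQ
      rw [Finset.mem_Icc] at heIcc
      rw [← hedef] at heIcc hfe
      have hej : j + 1 ≤ e := Finset.le_max' _ _ hQj
      have hQle : ∀ z, 1 ≤ z → z ≤ n → 2 ≤ f z → z ≤ e := fun z h1 h2 h3 =>
        Finset.le_max' Q z (Finset.mem_filter.2 ⟨Finset.mem_Icc.2 ⟨h1, h2⟩, h3⟩)
      have hen : e < n := by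
        rcases Nat.lt_or_ge e n with h | h
        · exact h
        · exfalso
          have he : e = n := by omega
          rw [he] at hfe
          omega
      have hfe1 : f (e + 1) = 1 := by
        have h1 : ¬(2 ≤ f (e + 1)) := by
          intro hc
          have := hQle (e + 1) (by omega) (by omega) hc
          omega
        have := (hbd (e + 1) (by omega) (by omega)).1
        omega
      have hMle : ∀ i ∈ Mk, i ≤ e + 1 := by
        intro i hi
        obtain ⟨hij, hin, hne⟩ := hMmem i hi
        by_contra h
        have hfi : f i = 1 := by
          have h1 : ¬(2 ≤ f i) := fun hc => by have := hQle i (by omega) hin hc; omega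
          have := (hbd i (by omega) hin).1
          omega
        have hfi1 : f (i - 1) = 1 := by
          have h1 : ¬(2 ≤ f (i - 1)) := fun hc => by
            have := hQle (i - 1) (by omega) (by omega) hc
            omega
          have := (hbd (i - 1) (by omega) (by omega)).1
          omega
        omega
      have he1Mk : e + 1 ∈ Mk := by
        refine Finset.mem_filter.2 ⟨Finset.mem_Icc.2 ⟨by omega, by omega⟩, ?_⟩
        rw [show e + 1 - 1 = e by omega, hfe1]
        omega
      have hMeq : Mk = insert (e + 1) (Mk.filter (· ≤ e)) := by
        ext i
        constructor
        · intro hi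
          rcases le_or_gt i e with h | h
          · exact Finset.mem_insert_of_mem (Finset.mem_filter.2 ⟨hi, h⟩)
          · have := hMle i hi
            have : i = e + 1 := by omega
            rw [this]
            exact Finset.mem_insert_self _ _
        · intro hi
          rcases Finset.mem_insert.1 hi with rfl | hi
          · exact he1Mk
          · exact (Finset.mem_filter.1 hi).1
      have hCe : Cf.filter (fun v => f e ≤ v) = Cf := by
        apply Finset.filter_true_of_mem
        intro v hv
        obtain ⟨hv2, _, y, hy1, hy2, hyv⟩ := hCmem v hv
        have hye : y ≤ e := hQle y (by omega) hy2 (by omega)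
        have := hmono' y e hy1 hye (by omega)
        omega
      have hMcard : Mk.card = r := by
        rw [hMeq, Finset.card_insert_of_notMem (by
          intro hc
          have := (Finset.mem_filter.1 hc).2
          omega), hMcount e hej (by omega) hfe, hCe, hCcard]
        omega
      refine ⟨hfn1, hMcard, ?_⟩
      intro x hx1 hx2 hfx i hi
      have hex : e < x := by
        by_contra h
        have := hmono' x e hx1 (by omega) (by omega)
        omega
      have := hMle i hi
      omega
  have hdisj : Disjoint Cf (Mk.image (· + 1)) := by
    rw [Finset.disjoint_left]
    intro v hv hvim
    obtain ⟨i, hi, hiv⟩ := Finset.mem_image.1 hvim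
    have h1 := (hMmem i hi).1
    have h2 := (hCmem v hv).2.1
    omega
  have hXeq : enc n f = Cf ∪ Mk.image (· + 1) := rfl
  have hEcard : (enc n f).card = Cf.card + Mk.card := by
    rw [hXeq, Finset.card_union_of_disjoint hdisj, Finset.card_image_of_injective _ succ_inj']
  constructor
  · rw [mem_Tset]
    constructor
    · rw [hXeq]
      intro y hy
      rcases Finset.mem_union.1 hy with hy | hy
      · have := hCmem y hy
        exact Finset.mem_Icc.2 ⟨this.1, by omega⟩
      · obtain ⟨i, hi, hiv⟩ := Finset.mem_image.1 hy
        have := hMmem i hi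
        exact Finset.mem_Icc.2 ⟨by omega, by omega⟩
    · rcases hMtotal with ⟨_, hM⟩ | ⟨_, hM, _⟩
      · left
        rw [hEcard, hCcard, hM]
        omega
      · right
        rw [hEcard, hCcard, hM]
        omega
  · -- dec (enc f) = f
    set X := enc n f with hXdef
    have hcnt : ∀ m, Nat.count (· ∈ X) m =
        (Cf.filter (· < m)).card + (Mk.filter (fun i => i + 1 < m)).card := by
      intro m
      rw [Nat.count_eq_card_filter_range]
      have h1 : (Finset.range m).filter (· ∈ X) = X.filter (· < m) := by
        ext y
        simp only [Finset.mem_filter, Finset.mem_range]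
        tauto
      rw [h1, hXeq, Finset.filter_union,
        Finset.card_union_of_disjoint (hdisj.mono (Finset.filter_subset _ _)
          (Finset.filter_subset _ _)),
        Finset.filter_image, Finset.card_image_of_injective _ succ_inj']
    funext x
    by_cases hx : 1 ≤ x ∧ x ≤ n
    · obtain ⟨hx1, hx2⟩ := hx
      rw [dec_in hx1 hx2, hcnt (x + 2)]
      have hCp : Cf.filter (· < x + 2) = Cf.filter (· ≤ x + 1) :=
        Finset.filter_congr (fun y _ => by omega)
      have hMp : Mk.filter (fun i => i + 1 < x + 2) = Mk.filter (· ≤ x) :=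
        Finset.filter_congr (fun y _ => by omega)
      rw [hCp, hMp]
      rcases le_or_gt x j with hxj | hxj
      · have hMe : Mk.filter (· ≤ x) = ∅ := by
          rw [Finset.filter_eq_empty_iff]
          intro i hi
          have := (hMmem i hi).1
          omega
        have hle : (Cf.filter (· ≤ x + 1)).card ≤ r - 1 :=
          le_of_le_of_eq (Finset.card_filter_le _ _) hCcard
        rw [hMe, Finset.card_empty, add_zero, if_pos (Or.inl (by omega))]
        exact (hone x hx1 hxj).symm
      · have hCfull : Cf.filter (· ≤ x + 1) = Cf := by
          apply Finset.filter_true_of_mem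
          intro v hv
          have := (hCmem v hv).2.1
          omega
        rw [hCfull, hCcard]
        rcases le_or_gt 2 (f x) with hfx | hfx
        · have hMeq : (Mk.filter (· ≤ x)).card = (Cf.filter (fun v => f x ≤ v)).card :=
            hMcount x (by omega) hx2 hfx
          have hMle : (Cf.filter (fun v => f x ≤ v)).card ≤ r - 1 :=
            le_of_le_of_eq (Finset.card_filter_le _ _) hCcard
          have hM1 : 1 ≤ (Mk.filter (· ≤ x)).card :=
            Finset.card_pos.2 ⟨j + 1, Finset.mem_filter.2 ⟨hMk_j1, by omega⟩⟩
          rw [if_neg (by omega : ¬(r - 1 + (Mk.filter (· ≤ x)).card < r ∨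
            2 * r - 1 ≤ r - 1 + (Mk.filter (· ≤ x)).card))]
          have hfxC : f x ∈ Cf := Finset.mem_erase.2 ⟨by omega,
            Finset.mem_image.2 ⟨x, Finset.mem_Icc.2 ⟨hx1, hx2⟩, rfl⟩⟩
          have hfxX : f x ∈ X := by
            rw [hXeq]
            exact Finset.mem_union_left _ hfxC
          have hcfx : Nat.count (· ∈ X) (f x) = r - 1 - (Mk.filter (· ≤ x)).card := by
            rw [hcnt]
            have h2z : Mk.filter (fun i => i + 1 < f x) = ∅ := by
              rw [Finset.filter_eq_empty_iff]
              intro i hi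
              have h1 := (hMmem i hi).1
              have h2 := hvle x (by omega) hx2
              omega
            have hsplit := Finset.card_filter_add_card_filter_not
              (s := Cf) (p := (· < f x))
            have hneg : Cf.filter (fun v => ¬(v < f x)) = Cf.filter (fun v => f x ≤ v) :=
              Finset.filter_congr (fun v _ => by omega)
            rw [hneg] at hsplit
            rw [h2z, Finset.card_empty, add_zero]
            omega
          rw [show 2 * r - 2 - (r - 1 + (Mk.filter (· ≤ x)).card) =
            r - 1 - (Mk.filter (· ≤ x)).card by omega, ← hcfx]
          exact Nat.nth_count hfxX
        · have hfx1 : f x = 1 := by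
            have := (hbd x hx1 hx2).1
            omega
          rcases hMtotal with ⟨hfn2, _⟩ | ⟨hfn1, hMr, hMall⟩
          · exfalso
            have := hmono' x n (by omega) hx2 le_rfl
            omega
          · have hfull : Mk.filter (· ≤ x) = Mk :=
              Finset.filter_true_of_mem (hMall x (by omega) hx2 hfx1)
            rw [hfull, hMr, if_pos (Or.inr (by omega))]
            exact hfx1.symm
    · have hd : dec n r X x = x := by
        unfold dec
        rw [if_pos hx]
      rw [hd]
      exact (hout x hx).symm

end StructSide
theorem card_J (n r : ℕ) (hn : 4 ≤ n) (hr3 : 3 ≤ r) (hr : r ≤ (n + 2) / 2) :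
    {f | f ∈ RDstar n ∧ (im n f).card = r}.ncard = Nat.choose (n + 1) (2 * r - 1) := by
  have hAeq : {f | f ∈ RDstar n ∧ (im n f).card = r} = (dec n r) '' ↑(Tset n r) := by
    ext f
    simp only [Set.mem_setOf_eq, Set.mem_image, Finset.mem_coe]
    constructor
    · intro hf
      have hs := mem_struct hr3 hf
      obtain ⟨hT, hde⟩ := struct_side hr3 hs
      exact ⟨enc n f, hT, hde⟩
    · rintro ⟨X, hX, rfl⟩
      obtain ⟨hXsub, hK⟩ := mem_Tset.1 hX
      exact struct_mem hr3 (dec_struct hr3 hXsub hK)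
  have hinj : Set.InjOn (dec n r) ↑(Tset n r) := by
    intro X hX Y hY h
    rw [Finset.mem_coe] at hX hY
    obtain ⟨hXsub, hKX⟩ := mem_Tset.1 hX
    obtain ⟨hYsub, hKY⟩ := mem_Tset.1 hY
    rw [← enc_dec hr3 hXsub hKX, h, enc_dec hr3 hYsub hKY]
  rw [hAeq, Set.ncard_image_of_injOn hinj, Set.ncard_coe_finset]
  have hdisj : Disjoint ((Finset.Icc 2 (n + 1)).powersetCard (2 * r - 2))
      ((Finset.Icc 2 (n + 1)).powersetCard (2 * r - 1)) := by
    rw [Finset.disjoint_left]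
    intro s h1 h2
    have e1 := (Finset.mem_powersetCard.1 h1).2
    have e2 := (Finset.mem_powersetCard.1 h2).2
    omega
  rw [Tset, Finset.card_union_of_disjoint hdisj, Finset.card_powersetCard,
    Finset.card_powersetCard, Nat.card_Icc, show n + 1 + 1 - 2 = n by omega,
    show 2 * r - 1 = (2 * r - 2) + 1 by omega, Nat.choose_succ_succ']

end ORDPaper
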